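/- (Currie's insertion lemma) Let φ₀ = x₁...x_t be a non-repetitive sequence over alphabet A, and let φ₁,...,φ_{t+1} be non-repetitive sequences (possibly empty) over alphabet B, where A and B are disjoint. Then the sequence φ₁ x₁ φ₂ x₂ ... φ_t x_t φ_{t+1} is non-repetitive. -/

import Mathlib

/-- A sequence is non-repetitive (Thue) if it contains no factor `w ++ w` with `w` nonempty. -/
def NonRep {α : Type*} (s : List α) : Prop :=
  ∀ w : List α, w ≠ [] → ¬ (w ++ w) <:+: s

/-- The interleaving `φ 0 ++ [x₁] ++ φ 1 ++ [x₂] ++ ⋯ ++ [x_t] ++ φ t`. -/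
def interleave {α : Type*} : List α → (ℕ → List α) → List α
  | [], φ => φ 0
  | a :: rest, φ => φ 0 ++ a :: interleave rest (fun n => φ (n + 1))

open List

section Aux

variable {α : Type*}

lemma prefix_of_append_cons {a : α} :
    ∀ (l₁ u t l₂ : List α), u ++ t = l₁ ++ a :: l₂ → a ∉ u → u <+: l₁ := by
  intro l₁
  induction l₁ with
  | nil =>
    intro u t l₂ h ha
    cases u with
    | nil => exact nil_prefix
    | cons b u' =>
      simp only [nil_append, cons_append, cons.injEq] at h
      exact absurd (h.1 ▸ mem_cons_self) ha
  | cons c l₁' ih =>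
    intro u t l₂ h ha
    cases u with
    | nil => exact nil_prefix
    | cons b u' =>
      simp only [cons_append, cons.injEq] at h
      obtain ⟨rfl, h2⟩ := h
      have := ih u' t l₂ h2 (fun hm => ha (mem_cons_of_mem _ hm))
      exact cons_prefix_cons.mpr ⟨rfl, this⟩

lemma infix_split {a : α} {u l₁ l₂ : List α}
    (h : u <:+: l₁ ++ a :: l₂) (ha : a ∉ u) : u <:+: l₁ ∨ u <:+: l₂ := by
  obtain ⟨s, t, hst⟩ := h
  induction s generalizing l₁ with
  | nil =>
    simp only [nil_append] at hst
    exact Or.inl (prefix_of_append_cons l₁ u t l₂ hst ha).isInfix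
  | cons b s' ih =>
    cases l₁ with
    | nil =>
      simp only [cons_append, nil_append, cons.injEq] at hst
      exact Or.inr ⟨s', t, hst.2⟩
    | cons c l₁' =>
      simp only [cons_append, cons.injEq] at hst
      rcases ih hst.2 with h' | h'
      · exact Or.inl (infix_cons h')
      · exact Or.inr h'

lemma mem_interleave {a : α} :
    ∀ (x : List α) (φ : ℕ → List α), a ∈ interleave x φ →
      a ∈ x ∨ ∃ i ≤ x.length, a ∈ φ i := by
  intro x
  induction x with
  | nil =>
    intro φ h
    exact Or.inr ⟨0, Nat.le_refl _, h⟩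
  | cons c rest ih =>
    intro φ h
    simp only [_root_.interleave, mem_append, mem_cons] at h
    rcases h with h | rfl | h
    · exact Or.inr ⟨0, Nat.zero_le _, h⟩
    · exact Or.inl (mem_cons_self)
    · rcases ih _ h with h' | ⟨i, hi, hm⟩
      · exact Or.inl (mem_cons_of_mem _ h')
      · exact Or.inr ⟨i + 1, Nat.succ_le_succ hi, hm⟩

lemma block_in_phi {B : Set α} {u : List α} :
    ∀ (x : List α) (φ : ℕ → List α), (∀ c ∈ x, c ∉ B) → (∀ b ∈ u, b ∈ B) →
      u <:+: interleave x φ → ∃ i ≤ x.length, u <:+: φ i := by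
  intro x
  induction x with
  | nil => intro φ _ _ h; exact ⟨0, Nat.le_refl _, h⟩
  | cons c rest ih =>
    intro φ hx hu h
    have hcu : c ∉ u := fun hm => hx c (mem_cons_self) (hu c hm)
    rcases infix_split (show u <:+: φ 0 ++ c :: interleave rest (fun n => φ (n+1)) from h) hcu with
      h' | h'
    · exact ⟨0, Nat.zero_le _, h'⟩
    · obtain ⟨i, hi, hm⟩ := ih _ (fun d hd => hx d (mem_cons_of_mem _ hd)) hu h'
      exact ⟨i + 1, Nat.succ_le_succ hi, hm⟩

lemma filter_interleave (p : α → Bool) :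
    ∀ (x : List α) (φ : ℕ → List α), (∀ a ∈ x, p a = true) →
      (∀ i ≤ x.length, ∀ b ∈ φ i, p b = false) →
      (interleave x φ).filter p = x := by
  intro x
  induction x with
  | nil =>
    intro φ _ hφ
    simp only [_root_.interleave, length_nil]
    exact filter_eq_nil_iff.mpr (fun b hb => by simp [hφ 0 (Nat.le_refl _) b hb])
  | cons c rest ih =>
    intro φ hx hφ
    simp only [_root_.interleave, filter_append, filter_cons]
    rw [filter_eq_nil_iff.mpr (fun b hb => by simp [hφ 0 (Nat.zero_le _) b hb])]
    rw [hx c (mem_cons_self)]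
    rw [ih (fun n => φ (n+1)) (fun a ha => hx a (mem_cons_of_mem _ ha))
      (fun i hi b hb => hφ (i+1) (Nat.succ_le_succ hi) b hb)]
    simp

end Aux

/-- Currie's insertion lemma: inserting non-repetitive sequences over an alphabet `B`
between the terms of a non-repetitive sequence over a disjoint alphabet `A` yields a
non-repetitive sequence. -/
theorem currie_insertion {α : Type*} (A B : Set α) (hAB : Disjoint A B)
    (x : List α) (hxA : ∀ a ∈ x, a ∈ A) (hx : NonRep x)
    (φ : ℕ → List α) (hφB : ∀ i ≤ x.length, ∀ b ∈ φ i, b ∈ B)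
    (hφ : ∀ i ≤ x.length, NonRep (φ i)) :
    NonRep (interleave x φ) := by
  classical
  intro w hw hww
  set p : α → Bool := fun a => decide (a ∈ A) with hp
  have hdisj : ∀ a, a ∈ A → a ∉ B := fun a haA haB =>
    Set.disjoint_left.mp hAB haA haB
  by_cases hwf : w.filter p = []
  · -- all letters of w are in B
    have hwB : ∀ b ∈ w, b ∈ B := by
      intro b hb
      have hbmem : b ∈ interleave x φ := hww.subset (by simp [hb])
      have hbA : b ∉ A := by
        intro hbA
        have : b ∈ w.filter p := mem_filter.mpr ⟨hb, by simp [hp, hbA]⟩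
        simp [hwf] at this
      rcases mem_interleave x φ hbmem with h | ⟨i, hi, hm⟩
      · exact absurd (hxA b h) hbA
      · exact hφB i hi b hm
    have hwwB : ∀ b ∈ w ++ w, b ∈ B := by
      intro b hb; rcases mem_append.mp hb with h | h <;> exact hwB b h
    obtain ⟨i, hi, hm⟩ := block_in_phi x φ (fun c hc => hdisj c (hxA c hc)) hwwB hww
    exact hφ i hi w hw hm
  · -- project to A
    have hfil : (interleave x φ).filter p = x :=
      filter_interleave p x φ (fun a ha => by simp [hp, hxA a ha])
        (fun i hi b hb => by simp [hp]; exact fun hbA => hdisj b hbA (hφB i hi b hb))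
    have : (w.filter p ++ w.filter p) <:+: x := by
      rw [← hfil, ← List.filter_append]
      exact hww.filter p
    exact hx (w.filter p) hwf this
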